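/- arXiv:2111.06114 — 5 statements merged into one kernel-verified Lean document; each statement's English description precedes it below -/
import Mathlib

section
/- Let A₁ and A₂ be K-algebras such that the tensor product algebra A₁ ⊗ A₂ is commutative and (A₁ ⊗ A₂)² ≠ 0. Then either both A₁ and A₂ are commutative, or both are zero-square algebras. -/
open scoped TensorProduct

/-- The square `B²` of an algebra `B`: the linear span of all products. -/
def algebraSquare (K : Type*) [Field K] (B : Type*) [NonUnitalNonAssocRing B]
    [Module K B] : Submodule K B :=
  Submodule.span K {z : B | ∃ x y : B, z = x * y}

lemma tmul_eq_zero_aux (K : Type*) [Field K] {M N : Type*} [AddCommGroup M] [Module K M]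
    [AddCommGroup N] [Module K N] {x : M} {y : N} (h : x ⊗ₜ[K] y = 0) : x = 0 ∨ y = 0 := by
  by_contra hc
  push_neg at hc
  obtain ⟨hx, hy⟩ := hc
  obtain ⟨φ, hφ⟩ : ∃ φ : Module.Dual K N, φ y ≠ 0 := by
    by_contra h'
    push_neg at h'
    exact hy ((Module.forall_dual_apply_eq_zero_iff K y).mp h')
  have h2 := congrArg (TensorProduct.lift (((LinearMap.lsmul K M).comp φ).flip)) h
  simp only [TensorProduct.lift.tmul, LinearMap.flip_apply, LinearMap.comp_apply,
    LinearMap.lsmul_apply, map_zero] at h2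
  rcases smul_eq_zero.mp h2 with h3 | h3
  exacts [hφ h3, hx h3]

/-- If the tensor product `A₁ ⊗ A₂` is commutative and `(A₁ ⊗ A₂)² ≠ 0`, then
either both `A₁` and `A₂` are commutative, or both are zero-square algebras. -/
theorem comm_or_zeroSquare_of_tensor_comm (K : Type*) [Field K]
    (A₁ A₂ : Type*) [NonUnitalNonAssocRing A₁] [NonUnitalNonAssocRing A₂]
    [Module K A₁] [SMulCommClass K A₁ A₁] [IsScalarTower K A₁ A₁]
    [Module K A₂] [SMulCommClass K A₂ A₂] [IsScalarTower K A₂ A₂]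
    (hcomm : ∀ z w : A₁ ⊗[K] A₂, z * w = w * z)
    (hsq : algebraSquare K (A₁ ⊗[K] A₂) ≠ ⊥) :
    ((∀ x y : A₁, x * y = y * x) ∧ (∀ x y : A₂, x * y = y * x)) ∨
      ((∀ x : A₁, x * x = 0) ∧ (∀ x : A₂, x * x = 0)) := by
  -- the key pointwise identity
  have hK : ∀ (a a' : A₁) (b b' : A₂),
      (a * a') ⊗ₜ[K] (b * b') = (a' * a) ⊗ₜ[K] (b' * b) := by
    intro a a' b b'
    have := hcomm (a ⊗ₜ[K] b) (a' ⊗ₜ[K] b')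
    simpa only [Algebra.TensorProduct.tmul_mul_tmul] using this
  -- if all products in A₁ vanish, the square of the tensor product is trivial
  have hnz1 : ¬ ∀ a a' : A₁, a * a' = 0 := by
    intro h0
    apply hsq
    rw [algebraSquare, Submodule.span_eq_bot]
    rintro z ⟨x, y, rfl⟩
    have key : ∀ x y : A₁ ⊗[K] A₂, x * y = 0 := by
      intro x y
      induction x using TensorProduct.induction_on with
      | zero => rw [zero_mul]
      | tmul a b =>
        induction y using TensorProduct.induction_on with
        | zero => rw [mul_zero]
        | tmul a' b' =>
          rw [Algebra.TensorProduct.tmul_mul_tmul, h0, TensorProduct.zero_tmul]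
        | add u v hu hv => rw [mul_add, hu, hv, add_zero]
      | add u v hu hv => rw [add_mul, hu, hv, add_zero]
    exact key x y
  have hnz2 : ¬ ∀ b b' : A₂, b * b' = 0 := by
    intro h0
    apply hsq
    rw [algebraSquare, Submodule.span_eq_bot]
    rintro z ⟨x, y, rfl⟩
    have key : ∀ x y : A₁ ⊗[K] A₂, x * y = 0 := by
      intro x y
      induction x using TensorProduct.induction_on with
      | zero => rw [zero_mul]
      | tmul a b =>
        induction y using TensorProduct.induction_on with
        | zero => rw [mul_zero]
        | tmul a' b' =>
          rw [Algebra.TensorProduct.tmul_mul_tmul, h0, TensorProduct.tmul_zero]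
        | add u v hu hv => rw [mul_add, hu, hv, add_zero]
      | add u v hu hv => rw [add_mul, hu, hv, add_zero]
    exact key x y
  -- if A₂ has a nonzero square, A₁ is commutative
  have comm1 : (∃ b : A₂, b * b ≠ 0) → ∀ a a' : A₁, a * a' = a' * a := by
    rintro ⟨b, hb⟩ a a'
    have h := hK a a' b b
    have h2 : (a * a' - a' * a) ⊗ₜ[K] (b * b) = 0 := by
      rw [TensorProduct.sub_tmul, h, sub_self]
    rcases tmul_eq_zero_aux K h2 with h3 | h3
    · exact sub_eq_zero.mp h3
    · exact absurd h3 hb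
  -- if A₁ has a nonzero square, A₂ is commutative
  have comm2 : (∃ a : A₁, a * a ≠ 0) → ∀ b b' : A₂, b * b' = b' * b := by
    rintro ⟨a, ha⟩ b b'
    have h := hK a a b b'
    have h2 : (a * a) ⊗ₜ[K] (b * b' - b' * b) = 0 := by
      rw [TensorProduct.tmul_sub, h, sub_self]
    rcases tmul_eq_zero_aux K h2 with h3 | h3
    · exact absurd h3 ha
    · exact sub_eq_zero.mp h3
  -- if A₁ is commutative and has a nonzero product, A₂ is commutative
  have step1 : (∀ a a' : A₁, a * a' = a' * a) → ∀ b b' : A₂, b * b' = b' * b := by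
    intro hc b b'
    push_neg at hnz1
    obtain ⟨a, a', ha⟩ := hnz1
    have h := hK a a' b b'
    rw [← hc a a'] at h
    have h2 : (a * a') ⊗ₜ[K] (b * b' - b' * b) = 0 := by
      rw [TensorProduct.tmul_sub, h, sub_self]
    rcases tmul_eq_zero_aux K h2 with h3 | h3
    · exact absurd h3 ha
    · exact sub_eq_zero.mp h3
  have step2 : (∀ b b' : A₂, b * b' = b' * b) → ∀ a a' : A₁, a * a' = a' * a := by
    intro hc a a'
    push_neg at hnz2
    obtain ⟨b, b', hb⟩ := hnz2
    have h := hK a a' b b'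
    rw [← hc b b'] at h
    have h2 : (a * a' - a' * a) ⊗ₜ[K] (b * b') = 0 := by
      rw [TensorProduct.sub_tmul, h, sub_self]
    rcases tmul_eq_zero_aux K h2 with h3 | h3
    · exact sub_eq_zero.mp h3
    · exact absurd h3 hb
  by_cases hz2 : ∀ x : A₂, x * x = 0
  · by_cases hz1 : ∀ x : A₁, x * x = 0
    · exact Or.inr ⟨hz1, hz2⟩
    · push_neg at hz1
      have hc2 := comm2 hz1
      exact Or.inl ⟨step2 hc2, hc2⟩
  · push_neg at hz2
    have hc1 := comm1 hz2
    exact Or.inl ⟨hc1, step1 hc1⟩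
end

section
/- Let A₁ and A₂ be nonzero K-algebras. Then A₁ and A₂ are both perfect (Aᵢ² = Aᵢ) if and only if A₁ ⊗ A₂ is perfect ((A₁⊗A₂)² = A₁⊗A₂). -/
open scoped TensorProduct

section aux
variable (K : Type*) [Field K]
    (A₁ A₂ : Type*) [NonUnitalNonAssocRing A₁] [NonUnitalNonAssocRing A₂]
    [Module K A₁] [SMulCommClass K A₁ A₁] [IsScalarTower K A₁ A₁]
    [Module K A₂] [SMulCommClass K A₂ A₂] [IsScalarTower K A₂ A₂]

lemma psi_vanish (f : A₁ →ₗ[K] K) (g : A₂ →ₗ[K] K)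
    (hfg : ∀ x y : A₁, ∀ u v : A₂, f (x * y) * g (u * v) = 0) (t₁ t₂ : A₁ ⊗[K] A₂) :
    (TensorProduct.lid K K).toLinearMap.comp (TensorProduct.map f g) (t₁ * t₂) = 0 := by
  set ψ := (TensorProduct.lid K K).toLinearMap.comp (TensorProduct.map f g) with hψ
  induction t₁ using TensorProduct.induction_on with
  | zero => simp
  | add a b ha hb => rw [add_mul, map_add, ha, hb, add_zero]
  | tmul x u =>
    induction t₂ using TensorProduct.induction_on with
    | zero => simp
    | add a b ha hb => rw [mul_add, map_add, ha, hb, add_zero]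
    | tmul y v =>
      rw [Algebra.TensorProduct.tmul_mul_tmul]
      simp [hψ, smul_eq_mul, hfg]

/-- If the tensor product is perfect, the left factor is perfect. -/
lemma left_perfect [Nontrivial A₂]
    (h : algebraSquare K (A₁ ⊗[K] A₂) = ⊤) : algebraSquare K A₁ = ⊤ := by
  by_contra hne
  obtain ⟨a, ha⟩ : ∃ a : A₁, a ∉ algebraSquare K A₁ := by
    by_contra h'; push_neg at h'; exact hne (Submodule.eq_top_iff'.2 h')
  have hq : (algebraSquare K A₁).mkQ a ≠ 0 := by
    simpa [Submodule.Quotient.mk_eq_zero] using ha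
  obtain ⟨F, hF⟩ : ∃ F : Module.Dual K (A₁ ⧸ algebraSquare K A₁),
      F ((algebraSquare K A₁).mkQ a) ≠ 0 := by
    by_contra h'; push_neg at h'
    exact hq ((Module.forall_dual_apply_eq_zero_iff K _).1 h')
  set f : A₁ →ₗ[K] K := F.comp (algebraSquare K A₁).mkQ with hf
  obtain ⟨b, hb⟩ := exists_ne (0 : A₂)
  obtain ⟨g, hg⟩ : ∃ g : Module.Dual K A₂, g b ≠ 0 := by
    by_contra h'; push_neg at h'
    exact hb ((Module.forall_dual_apply_eq_zero_iff K _).1 h')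
  have hfprod : ∀ x y : A₁, f (x * y) = 0 := by
    intro x y
    have : x * y ∈ algebraSquare K A₁ := Submodule.subset_span ⟨x, y, rfl⟩
    simp [hf, (Submodule.Quotient.mk_eq_zero _).2 this, Submodule.mkQ_apply]
  set ψ := (TensorProduct.lid K K).toLinearMap.comp (TensorProduct.map f g) with hψ
  have hker : algebraSquare K (A₁ ⊗[K] A₂) ≤ LinearMap.ker ψ := by
    rw [algebraSquare, Submodule.span_le]
    rintro z ⟨t₁, t₂, rfl⟩
    exact psi_vanish K A₁ A₂ f g (fun x y u v => by rw [hfprod, zero_mul]) t₁ t₂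
  have hzero : ψ (a ⊗ₜ[K] b) = 0 := by
    have : (a ⊗ₜ[K] b) ∈ LinearMap.ker ψ := hker (h ▸ Submodule.mem_top)
    exact this
  have : f a * g b = 0 := by simpa [hψ, smul_eq_mul] using hzero
  exact hF (by
    rcases mul_eq_zero.1 this with h' | h'
    · simpa [hf] using h'
    · exact absurd h' hg)

end aux

/-- For nonzero `K`-algebras `A₁`, `A₂`: both `A₁` and `A₂` are perfect
(`Aᵢ² = Aᵢ`) iff the tensor product `A₁ ⊗ A₂` is perfect. -/
theorem perfect_iff_tensor_perfect (K : Type*) [Field K]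
    (A₁ A₂ : Type*) [NonUnitalNonAssocRing A₁] [NonUnitalNonAssocRing A₂]
    [Nontrivial A₁] [Nontrivial A₂]
    [Module K A₁] [SMulCommClass K A₁ A₁] [IsScalarTower K A₁ A₁]
    [Module K A₂] [SMulCommClass K A₂ A₂] [IsScalarTower K A₂ A₂] :
    (algebraSquare K A₁ = ⊤ ∧ algebraSquare K A₂ = ⊤) ↔
      algebraSquare K (A₁ ⊗[K] A₂) = ⊤ := by
  constructor
  · rintro ⟨h₁, h₂⟩
    set S := algebraSquare K (A₁ ⊗[K] A₂) with hS
    have key : ∀ (a : A₁) (b : A₂), a ⊗ₜ[K] b ∈ S := by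
      intro a b
      rw [algebraSquare] at h₁ h₂
      have ha : a ∈ Submodule.span K {z : A₁ | ∃ x y : A₁, z = x * y} :=
        h₁.ge Submodule.mem_top
      induction ha using Submodule.span_induction generalizing b with
      | mem z hz =>
        obtain ⟨x, y, rfl⟩ := hz
        have hb : b ∈ Submodule.span K {z : A₂ | ∃ u v : A₂, z = u * v} :=
          h₂.ge Submodule.mem_top
        induction hb using Submodule.span_induction with
        | mem w hw =>
          obtain ⟨u, v, rfl⟩ := hw
          exact Submodule.subset_span ⟨x ⊗ₜ[K] u, y ⊗ₜ[K] v, by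
            rw [Algebra.TensorProduct.tmul_mul_tmul]⟩
        | zero => rw [TensorProduct.tmul_zero]; exact S.zero_mem
        | add u v _ _ hu hv => rw [TensorProduct.tmul_add]; exact S.add_mem hu hv
        | smul c u _ hu => rw [TensorProduct.tmul_smul]; exact S.smul_mem c hu
      | zero => rw [TensorProduct.zero_tmul]; exact S.zero_mem
      | add x y _ _ hx hy => rw [TensorProduct.add_tmul]; exact S.add_mem (hx b) (hy b)
      | smul c x _ hx =>
        rw [← TensorProduct.smul_tmul']; exact S.smul_mem c (hx b)
    rw [eq_top_iff, ← TensorProduct.span_tmul_eq_top K A₁ A₂, Submodule.span_le]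
    rintro z ⟨m, n, rfl⟩
    exact key m n
  · intro h
    refine ⟨left_perfect K A₁ A₂ h, ?_⟩
    -- transfer via comm
    apply left_perfect K A₂ A₁
    have hcomm : Submodule.map (TensorProduct.comm K A₁ A₂).toLinearMap
        (algebraSquare K (A₁ ⊗[K] A₂)) ≤ algebraSquare K (A₂ ⊗[K] A₁) := by
      rw [algebraSquare, Submodule.map_span, Submodule.span_le]
      rintro z ⟨w, ⟨t₁, t₂, rfl⟩, rfl⟩
      -- show comm (t₁ * t₂) ∈ span of products
      induction t₁ using TensorProduct.induction_on with
      | zero => simp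
      | add p q hp hq =>
        rw [add_mul, map_add]
        exact Submodule.add_mem _ hp hq
      | tmul x u =>
        induction t₂ using TensorProduct.induction_on with
        | zero => simp
        | add p q hp hq =>
          rw [mul_add, map_add]
          exact Submodule.add_mem _ hp hq
        | tmul y v =>
          rw [Algebra.TensorProduct.tmul_mul_tmul]
          simp only [LinearEquiv.coe_coe, TensorProduct.comm_tmul]
          exact Submodule.subset_span ⟨u ⊗ₜ[K] x, v ⊗ₜ[K] y, by
            rw [Algebra.TensorProduct.tmul_mul_tmul]⟩
    rw [eq_top_iff]
    intro z _
    have hz : z ∈ Submodule.map (TensorProduct.comm K A₁ A₂).toLinearMap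
        (algebraSquare K (A₁ ⊗[K] A₂)) := by
      rw [h]
      exact ⟨(TensorProduct.comm K A₁ A₂).symm z, Submodule.mem_top, by simp⟩
    exact hcomm hz
end

section
/- If A₁ and A₂ are evolution algebras over K, then A₁ ⊗ A₂ is an evolution algebra over K; more precisely, if {eᵢ} is a natural basis of A₁ and {fⱼ} is a natural basis of A₂, then {eᵢ ⊗ fⱼ} is a natural basis of A₁ ⊗ A₂ (distinct basis elements multiply to zero). -/
open scoped TensorProduct

/-- If `{eᵢ}` is a natural basis of the evolution algebra `A₁` and `{fⱼ}` is a
natural basis of `A₂`, then `{eᵢ ⊗ fⱼ}` is a natural basis of `A₁ ⊗ A₂`: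
distinct basis elements multiply to zero (and the tensor product remains
commutative), so `A₁ ⊗ A₂` is again an evolution algebra. -/
theorem tensor_evolution (K : Type*) [Field K]
    (A₁ A₂ : Type*) [NonUnitalNonAssocRing A₁] [NonUnitalNonAssocRing A₂]
    [Module K A₁] [SMulCommClass K A₁ A₁] [IsScalarTower K A₁ A₁]
    [Module K A₂] [SMulCommClass K A₂ A₂] [IsScalarTower K A₂ A₂]
    (hc₁ : ∀ x y : A₁, x * y = y * x) (hc₂ : ∀ x y : A₂, x * y = y * x)
    {ι κ : Type*} (b₁ : Module.Basis ι K A₁) (b₂ : Module.Basis κ K A₂)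
    (h₁ : ∀ i j, i ≠ j → b₁ i * b₁ j = 0)
    (h₂ : ∀ i j, i ≠ j → b₂ i * b₂ j = 0) :
    (∀ z w : A₁ ⊗[K] A₂, z * w = w * z) ∧
      ∀ p q : ι × κ, p ≠ q →
        (Module.Basis.tensorProduct b₁ b₂) p * (Module.Basis.tensorProduct b₁ b₂) q = 0 := by
  constructor
  · intro z w
    induction z using TensorProduct.induction_on with
    | zero => simp
    | tmul a b =>
      induction w using TensorProduct.induction_on with
      | zero => simp
      | tmul c d => rw [Algebra.TensorProduct.tmul_mul_tmul, Algebra.TensorProduct.tmul_mul_tmul, hc₁, hc₂]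
      | add x y hx hy => rw [mul_add, add_mul, hx, hy]
    | add x y hx hy => rw [add_mul, mul_add, hx, hy]
  · rintro ⟨i, j⟩ ⟨i', j'⟩ hpq
    rw [Module.Basis.tensorProduct_apply, Module.Basis.tensorProduct_apply,
      Algebra.TensorProduct.tmul_mul_tmul]
    rcases eq_or_ne i i' with rfl | hi
    · have hj : j ≠ j' := fun h => hpq (by rw [h])
      rw [h₂ j j' hj, TensorProduct.tmul_zero]
    · rw [h₁ i i' hi, TensorProduct.zero_tmul]
end

section
/- Let A₁ and A₂ be finite-dimensional evolution algebras with natural bases B₁ = {e₁,…,eₙ}, B₂ = {f₁,…,f_m} and structure matrices M₁ and M₂ respectively. Then the structure matrix of A₁ ⊗ A₂ relative to the natural basis {eᵢ ⊗ fⱼ} (ordered lexicographically) is the Kronecker product M₁ ⊗ M₂. -/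
open scoped TensorProduct Kronecker

/-- The structure matrix of the tensor product of two finite-dimensional
evolution algebras (w.r.t. the natural basis `{eᵢ ⊗ fⱼ}`) is the Kronecker
product of the structure matrices: here `M₁ k i` and `M₂ t j` are the
structure constants defined by `eᵢ² = Σ_k M₁ k i • e_k`, `fⱼ² = Σ_t M₂ t j • f_t`. -/
theorem tensor_structure_matrix (K : Type*) [Field K]
    (A₁ A₂ : Type*) [NonUnitalNonAssocRing A₁] [NonUnitalNonAssocRing A₂]
    [Module K A₁] [SMulCommClass K A₁ A₁] [IsScalarTower K A₁ A₁]
    [Module K A₂] [SMulCommClass K A₂ A₂] [IsScalarTower K A₂ A₂]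
    {n m : ℕ} (b₁ : Module.Basis (Fin n) K A₁) (b₂ : Module.Basis (Fin m) K A₂)
    (h₁ : ∀ i j, i ≠ j → b₁ i * b₁ j = 0)
    (h₂ : ∀ i j, i ≠ j → b₂ i * b₂ j = 0)
    (M₁ : Matrix (Fin n) (Fin n) K) (M₂ : Matrix (Fin m) (Fin m) K)
    (hM₁ : ∀ k i, M₁ k i = b₁.repr (b₁ i * b₁ i) k)
    (hM₂ : ∀ t j, M₂ t j = b₂.repr (b₂ j * b₂ j) t) :
    ∀ (p q : Fin n × Fin m),
      (Module.Basis.tensorProduct b₁ b₂).repr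
          ((Module.Basis.tensorProduct b₁ b₂) q * (Module.Basis.tensorProduct b₁ b₂) q) p =
        (M₁ ⊗ₖ M₂) p q := by
  intro p q
  simp [Module.Basis.tensorProduct_apply', Algebra.TensorProduct.tmul_mul_tmul,
    Matrix.kroneckerMap_apply, hM₁, hM₂, mul_comm]
  rw [Module.Basis.tensorProduct_repr_tmul_apply]
  rw [smul_eq_mul, mul_comm]
end

section
/- Let A₁ and A₂ be K-algebras such that A₁ ⊗ A₂ is an evolution algebra, and suppose A₂ has an ideal J of codimension 1 with A₂² ⊄ J. Then A₁ is an evolution algebra. (Proof idea: the quotient gives an algebra epimorphism φ: A₂ → K, and Ω: A₁⊗A₂ → A₁, a⊗b ↦ φ(b)a, is a surjective algebra homomorphism; every epimorphic image of an evolution algebra is an evolution algebra.) -/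
open scoped TensorProduct

/-- A `K`-algebra is an evolution algebra if it is commutative and admits a
natural basis: a basis in which distinct basis elements multiply to zero. -/
def IsEvolutionAlgebra (K : Type*) [Field K] (A : Type*) [NonUnitalNonAssocRing A]
    [Module K A] : Prop :=
  (∀ x y : A, x * y = y * x) ∧
    ∃ (s : Set A) (b : Module.Basis s K A), ∀ i j : s, i ≠ j → (b i) * (b j) = 0

/-- If `A₁ ⊗ A₂` is an evolution algebra and `A₂` has a two-sided ideal `J` of
codimension `1` with `A₂² ⊄ J`, then `A₁` is an evolution algebra. -/
theorem evolution_of_tensor_evolution (K : Type*) [Field K]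
    (A₁ A₂ : Type*) [NonUnitalNonAssocRing A₁] [NonUnitalNonAssocRing A₂]
    [Module K A₁] [SMulCommClass K A₁ A₁] [IsScalarTower K A₁ A₁]
    [Module K A₂] [SMulCommClass K A₂ A₂] [IsScalarTower K A₂ A₂]
    (hev : IsEvolutionAlgebra K (A₁ ⊗[K] A₂))
    (J : Submodule K A₂)
    (hJideal : ∀ (a x : A₂), x ∈ J → a * x ∈ J ∧ x * a ∈ J)
    (hcodim : Module.finrank K (A₂ ⧸ J) = 1)
    (hsq : ¬ algebraSquare K A₂ ≤ J) :
    IsEvolutionAlgebra K A₁ := by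
  obtain ⟨hcomm, s, b, hb⟩ := hev
  -- a linear equivalence A₂⧸J ≃ K
  obtain ⟨bq⟩ := (finrank_eq_one_iff (Fin 1)).mp hcodim
  let e : (A₂ ⧸ J) ≃ₗ[K] K := bq.equivFun.trans (LinearEquiv.funUnique (Fin 1) K K)
  let ψ : A₂ →ₗ[K] K := e.toLinearMap ∘ₗ J.mkQ
  have hker : ∀ x : A₂, ψ x = 0 ↔ x ∈ J := by
    intro x
    have h1 : ψ x = 0 ↔ J.mkQ x = 0 := by
      rw [show ψ x = e (J.mkQ x) from rfl]
      exact ⟨fun h => e.injective (by simpa using h), fun h => by rw [h, map_zero]⟩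
    rw [h1, Submodule.mkQ_apply, Submodule.Quotient.mk_eq_zero]
  have hψsurj : Function.Surjective ψ := e.surjective.comp (Submodule.mkQ_surjective J)
  obtain ⟨b₀, hb₀⟩ := hψsurj 1
  set lam : K := ψ (b₀ * b₀) with hlam
  -- key multiplicativity up to scalar
  have key : ∀ x y : A₂, ψ (x * y) = lam * (ψ x * ψ y) := by
    intro x y
    set jx : A₂ := x - ψ x • b₀ with hjx
    set jy : A₂ := y - ψ y • b₀ with hjy
    have hjxJ : jx ∈ J := (hker jx).mp (by simp [hjx, hb₀])
    have hjyJ : jy ∈ J := (hker jy).mp (by simp [hjy, hb₀])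
    have hx' : x = ψ x • b₀ + jx := by simp [hjx]
    have hy' : y = ψ y • b₀ + jy := by simp [hjy]
    have hexp : x * y = (ψ x * ψ y) • (b₀ * b₀) +
        ((ψ x • b₀) * jy + (jx * (ψ y • b₀) + jx * jy)) := by
      conv_lhs => rw [hx', hy']
      rw [add_mul, mul_add, mul_add, smul_mul_smul_comm]
      abel
    rw [hexp, map_add, map_add, map_add, map_smul]
    rw [(hker _).mpr (hJideal _ _ hjyJ).1, (hker _).mpr (hJideal _ _ hjxJ).2,
      (hker _).mpr (hJideal _ _ hjyJ).1]
    simp [hlam]; ring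
  -- lam ≠ 0
  have hlam0 : lam ≠ 0 := by
    rw [algebraSquare, Submodule.span_le] at hsq
    rw [Set.not_subset] at hsq
    obtain ⟨z, ⟨x, y, rfl⟩, hz⟩ := hsq
    have : ψ (x * y) ≠ 0 := fun h => hz ((hker _).mp h)
    rw [key] at this
    intro h; exact this (by rw [h, zero_mul])
  -- the multiplicative functional
  set φ : A₂ →ₗ[K] K := lam • ψ with hφ
  have hφmul : ∀ x y : A₂, φ (x * y) = φ x * φ y := by
    intro x y
    simp only [hφ, LinearMap.smul_apply, smul_eq_mul, key]
    ring
  have hφb₀ : φ b₀ = lam := by simp [hφ, hb₀]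
  -- the map Ω : A₁ ⊗ A₂ → A₁
  let Ω : A₁ ⊗[K] A₂ →ₗ[K] A₁ := TensorProduct.lift
    (LinearMap.mk₂ K (fun a c => φ c • a)
      (fun a a' c => smul_add _ _ _)
      (fun k a c => smul_comm _ _ _)
      (fun a c c' => by simp [add_smul])
      (fun k a c => by simp [mul_smul]))
  have hΩtmul : ∀ (a : A₁) (c : A₂), Ω (a ⊗ₜ[K] c) = φ c • a := fun a c => rfl
  have hΩmul : ∀ x y : A₁ ⊗[K] A₂, Ω (x * y) = Ω x * Ω y := by
    intro x y
    induction x using TensorProduct.induction_on with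
    | zero => simp
    | add u v hu hv => rw [add_mul, map_add, map_add, add_mul, hu, hv]
    | tmul a c =>
      induction y using TensorProduct.induction_on with
      | zero => simp
      | add u v hu hv => rw [mul_add, map_add, map_add, mul_add, hu, hv]
      | tmul a' c' =>
        rw [Algebra.TensorProduct.tmul_mul_tmul, hΩtmul, hΩtmul, hΩtmul, hφmul,
          smul_mul_smul_comm]
  have hΩsurj : Function.Surjective Ω := by
    intro a
    refine ⟨(lam⁻¹ • a) ⊗ₜ[K] b₀, ?_⟩
    rw [hΩtmul, hφb₀, smul_smul, mul_inv_cancel₀ hlam0, one_smul]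
  have hcomm' : ∀ x y : A₁, x * y = y * x := by
    intro x y
    obtain ⟨u, rfl⟩ := hΩsurj x
    obtain ⟨v, rfl⟩ := hΩsurj y
    rw [← hΩmul, ← hΩmul, hcomm]
  refine ⟨hcomm', ?_⟩
  -- spanning set: images of the natural basis
  set T : Set A₁ := Set.range fun i : s => Ω (b i) with hT
  have hTspan : Submodule.span K T = ⊤ := by
    have h1 : T = Ω '' Set.range b := by
      rw [hT, ← Set.range_comp]; rfl
    rw [h1, Submodule.span_image, b.span_eq, Submodule.map_top,
      LinearMap.range_eq_top.mpr hΩsurj]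
  obtain ⟨t, hts, hspan, hli⟩ := exists_linearIndependent K T
  have htop : ⊤ ≤ Submodule.span K (Set.range ((↑) : t → A₁)) := by
    rw [Subtype.range_coe, hspan, hTspan]
  refine ⟨t, Module.Basis.mk hli htop, ?_⟩
  intro i j hij
  rw [Module.Basis.mk_apply, Module.Basis.mk_apply]
  obtain ⟨i₀, hi₀⟩ := hts i.2
  obtain ⟨j₀, hj₀⟩ := hts j.2
  have hne : i₀ ≠ j₀ := by
    rintro rfl
    exact hij (Subtype.ext ((hi₀.symm.trans hj₀ : _)))
  have hi₀' : Ω (b i₀) = (i : A₁) := hi₀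
  have hj₀' : Ω (b j₀) = (j : A₁) := hj₀
  calc (i : A₁) * (j : A₁) = Ω (b i₀) * Ω (b j₀) := by rw [hi₀', hj₀']
    _ = Ω (b i₀ * b j₀) := (hΩmul _ _).symm
    _ = 0 := by rw [hb i₀ j₀ hne, map_zero]
end
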